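/- There exists an absolute constant C > 0 such that the following holds. Let A > 0 and let U : [−1,1] → ℝ be continuous on [−1,1] and continuously differentiable on (−1,1), satisfying |U(y)| ≤ A(1−y²)(1 + |ln(1−y²)|) and |U'(y)| ≤ A(1 + |ln(1−y²)|) for all y ∈ (−1,1). Then the associated axisymmetric no-swirl velocity field u and pressure p satisfy, for all x ∈ ℝ³ with x' ≠ 0, |u(x)| ≤ C A (1 + ln(|x|/|x'|)) / |x| and |p(x)| ≤ C (A + A²) (1 + ln(|x|/|x'|)) / |x|². -/

import Mathlib

open Set

/-- The Euclidean norm of `x' = (x₁, x₂)`, the first two coordinates of `x ∈ ℝ³`. -/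
noncomputable def primeNorm3 (x : EuclideanSpace ℝ (Fin 3)) : ℝ :=
  Real.sqrt (x 0 ^ 2 + x 1 ^ 2)

/-- The axisymmetric no-swirl velocity field associated with the profile `U`:
writing `r = |x|`, `ρ = |x'|`, `y = x₃/r`,
`u₁ = x₁U'(y)/r² + x₁x₃U(y)/(rρ²)`, `u₂ = x₂U'(y)/r² + x₂x₃U(y)/(rρ²)`,
`u₃ = x₃U'(y)/r² - U(y)/r`. -/
noncomputable def velField (U : ℝ → ℝ) (x : EuclideanSpace ℝ (Fin 3)) :
    EuclideanSpace ℝ (Fin 3) :=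
  WithLp.toLp 2 fun i =>
    if i = 0 then
      x 0 * deriv U (x 2 / ‖x‖) / ‖x‖ ^ 2 + x 0 * x 2 * U (x 2 / ‖x‖) / (‖x‖ * primeNorm3 x ^ 2)
    else if i = 1 then
      x 1 * deriv U (x 2 / ‖x‖) / ‖x‖ ^ 2 + x 1 * x 2 * U (x 2 / ‖x‖) / (‖x‖ * primeNorm3 x ^ 2)
    else
      x 2 * deriv U (x 2 / ‖x‖) / ‖x‖ ^ 2 - U (x 2 / ‖x‖) / ‖x‖

/-- The pressure associated with the profile `U`:
`p = U'(y)/r² - U(y)²/(2ρ²)` with `r = |x|`, `ρ = |x'|`, `y = x₃/r`. -/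
noncomputable def pressure (U : ℝ → ℝ) (x : EuclideanSpace ℝ (Fin 3)) : ℝ :=
  deriv U (x 2 / ‖x‖) / ‖x‖ ^ 2 - (U (x 2 / ‖x‖)) ^ 2 / (2 * primeNorm3 x ^ 2)

set_option maxHeartbeats 4000000 in
/-- Pointwise bounds on the velocity field and pressure associated with a profile
satisfying the asymptotic bounds (Corollary 2.2, estimates (2.15)-(2.16) and (3.2)). -/
theorem stmt9 :
    ∃ C > 0, ∀ A : ℝ, 0 < A → ∀ U : ℝ → ℝ,
      ContinuousOn U (Icc (-1) 1) → ContDiffOn ℝ 1 U (Ioo (-1) 1) →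
      (∀ y ∈ Ioo (-1 : ℝ) 1, |U y| ≤ A * (1 - y ^ 2) * (1 + |Real.log (1 - y ^ 2)|)) →
      (∀ y ∈ Ioo (-1 : ℝ) 1, |deriv U y| ≤ A * (1 + |Real.log (1 - y ^ 2)|)) →
      ∀ x : EuclideanSpace ℝ (Fin 3), ¬(x 0 = 0 ∧ x 1 = 0) →
        ‖velField U x‖ ≤ C * A * (1 + Real.log (‖x‖ / primeNorm3 x)) / ‖x‖ ∧
        |pressure U x| ≤ C * (A + A ^ 2) * (1 + Real.log (‖x‖ / primeNorm3 x)) / ‖x‖ ^ 2 := by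
  refine ⟨100, by norm_num, ?_⟩
  intro A hA U hUc hUd hU hU' x hx
  have hρ2 : primeNorm3 x ^ 2 = x 0 ^ 2 + x 1 ^ 2 := Real.sq_sqrt (by positivity)
  have hρpos : 0 < primeNorm3 x := by
    rw [primeNorm3, Real.sqrt_pos]
    rcases not_and_or.mp hx with h | h
    · nlinarith [sq_nonneg (x 1), sq_pos_of_ne_zero h]
    · nlinarith [sq_nonneg (x 0), sq_pos_of_ne_zero h]
  have hr2 : ‖x‖ ^ 2 = x 0 ^ 2 + x 1 ^ 2 + x 2 ^ 2 := by
    rw [EuclideanSpace.norm_eq, Real.sq_sqrt (by positivity), Fin.sum_univ_three]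
    simp [Real.norm_eq_abs, sq_abs]
  have hrpos : 0 < ‖x‖ := by nlinarith [norm_nonneg x, sq_nonneg (x 2)]
  have hρr : primeNorm3 x ≤ ‖x‖ := by nlinarith [sq_nonneg (x 2)]
  set y := x 2 / ‖x‖ with hy
  set L := Real.log (‖x‖ / primeNorm3 x) with hLdef
  have hL : 0 ≤ L := Real.log_nonneg ((one_le_div hρpos).mpr hρr)
  have h1y : 1 - y ^ 2 = primeNorm3 x ^ 2 / ‖x‖ ^ 2 := by
    rw [hy]; field_simp; nlinarith [hr2, hρ2]
  have hy2 : 0 < 1 - y ^ 2 := by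
    rw [h1y]; positivity
  have hymem : y ∈ Ioo (-1 : ℝ) 1 := by
    constructor <;> nlinarith [hy2, sq_nonneg (y + 1), sq_nonneg (y - 1)]
  have hlog : Real.log (1 - y ^ 2) = -(2 * L) := by
    rw [h1y, hLdef, Real.log_div (pow_ne_zero 2 hρpos.ne') (pow_ne_zero 2 hrpos.ne'),
      Real.log_div hrpos.ne' hρpos.ne', Real.log_pow, Real.log_pow]
    push_cast; ring
  have habs : |Real.log (1 - y ^ 2)| = 2 * L := by
    rw [hlog, abs_neg, abs_of_nonneg (by linarith)]
  set B := A * (1 + 2 * L) with hBdef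
  have hB : 0 < B := mul_pos hA (by linarith)
  have hDy : |deriv U y| ≤ B := by
    have h := hU' y hymem
    rw [habs] at h
    exact h
  have hUy : |U y| ≤ B * primeNorm3 x ^ 2 / ‖x‖ ^ 2 := by
    have h := hU y hymem
    rw [habs, h1y] at h
    calc |U y| ≤ A * (primeNorm3 x ^ 2 / ‖x‖ ^ 2) * (1 + 2 * L) := h
      _ = B * primeNorm3 x ^ 2 / ‖x‖ ^ 2 := by rw [hBdef]; ring
  have hUyB : |U y| ≤ B := by
    refine hUy.trans ?_
    rw [div_le_iff₀ (by positivity)]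
    nlinarith [mul_le_mul_of_nonneg_left (pow_le_pow_left₀ hρpos.le hρr 2) hB.le]
  have ha0 : |x 0| ≤ primeNorm3 x := by
    rw [primeNorm3, ← Real.sqrt_sq_eq_abs]
    exact Real.sqrt_le_sqrt (by nlinarith [sq_nonneg (x 1)])
  have ha1 : |x 1| ≤ primeNorm3 x := by
    rw [primeNorm3, ← Real.sqrt_sq_eq_abs]
    exact Real.sqrt_le_sqrt (by nlinarith [sq_nonneg (x 0)])
  have ha2 : |x 2| ≤ ‖x‖ := by
    nlinarith [sq_abs (x 2), abs_nonneg (x 2), sq_nonneg (x 0), sq_nonneg (x 1), hr2, hrpos]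
  have key : ∀ a : ℝ, |a| ≤ primeNorm3 x →
      |a * deriv U y / ‖x‖ ^ 2 + a * x 2 * U y / (‖x‖ * primeNorm3 x ^ 2)| ≤ 2 * B / ‖x‖ := by
    intro a haa
    have t1 : |a * deriv U y / ‖x‖ ^ 2| ≤ B / ‖x‖ := by
      rw [abs_div, abs_mul, abs_of_nonneg (sq_nonneg ‖x‖)]
      calc |a| * |deriv U y| / ‖x‖ ^ 2 ≤ ‖x‖ * B / ‖x‖ ^ 2 :=
          (div_le_div_iff_of_pos_right (pow_pos hrpos 2)).mpr
            (mul_le_mul (haa.trans hρr) hDy (abs_nonneg _) hrpos.le)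
        _ = B / ‖x‖ := by rw [sq, mul_div_mul_left _ _ hrpos.ne']
    have t2 : |a * x 2 * U y / (‖x‖ * primeNorm3 x ^ 2)| ≤ B / ‖x‖ := by
      rw [abs_div, abs_mul, abs_mul,
        abs_of_nonneg (mul_nonneg hrpos.le (sq_nonneg (primeNorm3 x)))]
      have hden : (0:ℝ) < ‖x‖ * primeNorm3 x ^ 2 := mul_pos hrpos (pow_pos hρpos 2)
      calc |a| * |x 2| * |U y| / (‖x‖ * primeNorm3 x ^ 2)
          ≤ primeNorm3 x * ‖x‖ * (B * primeNorm3 x ^ 2 / ‖x‖ ^ 2) / (‖x‖ * primeNorm3 x ^ 2) :=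
            (div_le_div_iff_of_pos_right hden).mpr
              (mul_le_mul (mul_le_mul haa ha2 (abs_nonneg _) hρpos.le) hUy (abs_nonneg _)
                (mul_nonneg hρpos.le hrpos.le))
        _ = B * primeNorm3 x / ‖x‖ ^ 2 := by field_simp
        _ ≤ B * ‖x‖ / ‖x‖ ^ 2 :=
            (div_le_div_iff_of_pos_right (pow_pos hrpos 2)).mpr (mul_le_mul_of_nonneg_left hρr hB.le)
        _ = B / ‖x‖ := by rw [sq, mul_comm B ‖x‖, mul_div_mul_left _ _ hrpos.ne']
    calc |a * deriv U y / ‖x‖ ^ 2 + a * x 2 * U y / (‖x‖ * primeNorm3 x ^ 2)|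
        ≤ |a * deriv U y / ‖x‖ ^ 2| + |a * x 2 * U y / (‖x‖ * primeNorm3 x ^ 2)| := abs_add_le _ _
      _ ≤ B / ‖x‖ + B / ‖x‖ := add_le_add t1 t2
      _ = 2 * B / ‖x‖ := by ring
  have key2 : |x 2 * deriv U y / ‖x‖ ^ 2 - U y / ‖x‖| ≤ 2 * B / ‖x‖ := by
    have t1 : |x 2 * deriv U y / ‖x‖ ^ 2| ≤ B / ‖x‖ := by
      rw [abs_div, abs_mul, abs_of_nonneg (sq_nonneg ‖x‖)]
      calc |x 2| * |deriv U y| / ‖x‖ ^ 2 ≤ ‖x‖ * B / ‖x‖ ^ 2 :=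
          (div_le_div_iff_of_pos_right (pow_pos hrpos 2)).mpr (mul_le_mul ha2 hDy (abs_nonneg _) hrpos.le)
        _ = B / ‖x‖ := by rw [sq, mul_div_mul_left _ _ hrpos.ne']
    have t2 : |U y / ‖x‖| ≤ B / ‖x‖ := by
      rw [abs_div, abs_of_nonneg hrpos.le]
      exact (div_le_div_iff_of_pos_right hrpos).mpr hUyB
    calc |x 2 * deriv U y / ‖x‖ ^ 2 - U y / ‖x‖|
        ≤ |x 2 * deriv U y / ‖x‖ ^ 2| + |U y / ‖x‖| := abs_sub _ _
      _ ≤ B / ‖x‖ + B / ‖x‖ := add_le_add t1 t2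
      _ = 2 * B / ‖x‖ := by ring
  have hu0 : velField U x 0 = x 0 * deriv U y / ‖x‖ ^ 2
      + x 0 * x 2 * U y / (‖x‖ * primeNorm3 x ^ 2) := by
    simp [velField, hy]
  have hu1 : velField U x 1 = x 1 * deriv U y / ‖x‖ ^ 2
      + x 1 * x 2 * U y / (‖x‖ * primeNorm3 x ^ 2) := by
    simp [velField, hy]
  have hu2 : velField U x 2 = x 2 * deriv U y / ‖x‖ ^ 2 - U y / ‖x‖ := by
    simp [velField, hy]
  constructor
  · -- velocity bound
    have b0 : ‖velField U x 0‖ ≤ 2 * B / ‖x‖ := by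
      rw [hu0, Real.norm_eq_abs]; exact key _ ha0
    have b1 : ‖velField U x 1‖ ≤ 2 * B / ‖x‖ := by
      rw [hu1, Real.norm_eq_abs]; exact key _ ha1
    have b2 : ‖velField U x 2‖ ≤ 2 * B / ‖x‖ := by
      rw [hu2, Real.norm_eq_abs]; exact key2
    have hMnn : (0:ℝ) ≤ 2 * B / ‖x‖ := by positivity
    have c0 : ‖velField U x 0‖ ^ 2 ≤ (2 * B / ‖x‖) ^ 2 := pow_le_pow_left₀ (norm_nonneg _) b0 2
    have c1 : ‖velField U x 1‖ ^ 2 ≤ (2 * B / ‖x‖) ^ 2 := pow_le_pow_left₀ (norm_nonneg _) b1 2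
    have c2 : ‖velField U x 2‖ ^ 2 ≤ (2 * B / ‖x‖) ^ 2 := pow_le_pow_left₀ (norm_nonneg _) b2 2
    have hnorm : ‖velField U x‖ ≤ 4 * B / ‖x‖ := by
      rw [EuclideanSpace.norm_eq, Fin.sum_univ_three]
      calc Real.sqrt (‖velField U x 0‖ ^ 2 + ‖velField U x 1‖ ^ 2 + ‖velField U x 2‖ ^ 2)
          ≤ Real.sqrt ((2 * (2 * B / ‖x‖)) ^ 2) := by
            apply Real.sqrt_le_sqrt
            nlinarith [c0, c1, c2, sq_nonneg (2 * B / ‖x‖)]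
        _ = 2 * (2 * B / ‖x‖) := Real.sqrt_sq (by linarith)
        _ = 4 * B / ‖x‖ := by ring
    refine hnorm.trans ?_
    apply (div_le_div_iff_of_pos_right hrpos).mpr
    rw [hBdef]
    nlinarith [mul_nonneg hA.le hL, hA.le]
  · -- pressure bound
    have hp : pressure U x = deriv U y / ‖x‖ ^ 2 - (U y) ^ 2 / (2 * primeNorm3 x ^ 2) := by
      simp [pressure, hy]
    have hkey2 : (1 + 2 * L) * primeNorm3 x ≤ 2 * ‖x‖ := by
      have h1 : L ≤ ‖x‖ / primeNorm3 x - 1 := by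
        rw [hLdef]; linarith [Real.log_le_sub_one_of_pos (div_pos hrpos hρpos)]
      have h2 := mul_le_mul_of_nonneg_right h1 hρpos.le
      rw [sub_mul, one_mul, div_mul_cancel₀ _ hρpos.ne'] at h2
      nlinarith [hρpos.le]
    have hkey3 : ((1 + 2 * L) * primeNorm3 x) * ((1 + 2 * L) * primeNorm3 x)
        ≤ (2 * ‖x‖) * (2 * ‖x‖) :=
      mul_le_mul hkey2 hkey2 (mul_nonneg (by linarith) hρpos.le) (by linarith)
    have hUy' : |U y| * ‖x‖ ^ 2 ≤ B * primeNorm3 x ^ 2 := by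
      have h := mul_le_mul_of_nonneg_right hUy (sq_nonneg ‖x‖)
      rwa [div_mul_cancel₀ _ (pow_ne_zero 2 hrpos.ne')] at h
    have hUsq : |U y| ^ 2 * (‖x‖ ^ 2 * ‖x‖ ^ 2)
        ≤ (B * primeNorm3 x ^ 2) * (B * primeNorm3 x ^ 2) := by
      have h := mul_le_mul hUy' hUy' (mul_nonneg (abs_nonneg _) (sq_nonneg _))
        (mul_nonneg hB.le (sq_nonneg _))
      calc |U y| ^ 2 * (‖x‖ ^ 2 * ‖x‖ ^ 2) = (|U y| * ‖x‖ ^ 2) * (|U y| * ‖x‖ ^ 2) := by ring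
        _ ≤ _ := h
    have hpt2 : (U y) ^ 2 / (2 * primeNorm3 x ^ 2) ≤ 2 * A ^ 2 / ‖x‖ ^ 2 := by
      rw [div_le_div_iff₀ (mul_pos two_pos (pow_pos hρpos 2)) (pow_pos hrpos 2)]
      rw [← sq_abs (U y)]
      have e1 : |U y| ^ 2 * (‖x‖ ^ 2 * ‖x‖ ^ 2) ≤ (A ^ 2 * primeNorm3 x ^ 2)
          * (((1 + 2 * L) * primeNorm3 x) * ((1 + 2 * L) * primeNorm3 x)) :=
        hUsq.trans_eq (by rw [hBdef]; ring)
      have e2 := mul_le_mul_of_nonneg_left hkey3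
        (show (0:ℝ) ≤ A ^ 2 * primeNorm3 x ^ 2 by positivity)
      have e3 := e1.trans e2
      have e4 : (|U y| ^ 2 * ‖x‖ ^ 2) * ‖x‖ ^ 2 ≤ (2 * A ^ 2 * (2 * primeNorm3 x ^ 2)) * ‖x‖ ^ 2 := by
        calc (|U y| ^ 2 * ‖x‖ ^ 2) * ‖x‖ ^ 2 = |U y| ^ 2 * (‖x‖ ^ 2 * ‖x‖ ^ 2) := by ring
          _ ≤ (A ^ 2 * primeNorm3 x ^ 2) * (2 * ‖x‖ * (2 * ‖x‖)) := e3
          _ = (2 * A ^ 2 * (2 * primeNorm3 x ^ 2)) * ‖x‖ ^ 2 := by ring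
      exact le_of_mul_le_mul_right e4 (pow_pos hrpos 2)
    have hpt1 : |deriv U y| / ‖x‖ ^ 2 ≤ B / ‖x‖ ^ 2 :=
      (div_le_div_iff_of_pos_right (pow_pos hrpos 2)).mpr hDy
    have hq2nn : (0:ℝ) ≤ (U y) ^ 2 / (2 * primeNorm3 x ^ 2) :=
      div_nonneg (sq_nonneg _) (by positivity)
    calc |pressure U x| ≤ |deriv U y / ‖x‖ ^ 2| + |(U y) ^ 2 / (2 * primeNorm3 x ^ 2)| := by
          rw [hp]; exact abs_sub _ _
      _ = |deriv U y| / ‖x‖ ^ 2 + (U y) ^ 2 / (2 * primeNorm3 x ^ 2) := by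
          rw [abs_div, abs_of_nonneg (sq_nonneg ‖x‖), abs_of_nonneg hq2nn]
      _ ≤ B / ‖x‖ ^ 2 + 2 * A ^ 2 / ‖x‖ ^ 2 := add_le_add hpt1 hpt2
      _ ≤ 100 * (A + A ^ 2) * (1 + L) / ‖x‖ ^ 2 := by
          rw [← add_div, hBdef]
          apply (div_le_div_iff_of_pos_right (pow_pos hrpos 2)).mpr
          nlinarith [mul_nonneg hA.le hL, mul_nonneg (mul_nonneg hA.le hA.le) hL,
            hA.le, mul_nonneg hA.le hA.le]
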